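/- Let k be a perfect field of prime characteristic p, S = k[[x_1,…,x_n]], let Δ be a simplicial complex on {1,…,n} with exactly m facets, let I = I_Δ ⊆ S be its Stanley–Reisner ideal (the ideal generated by the square-free monomials ∏_{i∈G} x_i for G ∉ Δ), and let R = S/I. Then R is f_max(Δ)-tight with f_max(Δ) = m: for every ideal J of R and every x ∈ J*, there exist a_1, …, a_m ∈ R with a_i ∈ J^i and x^m + a_1·x^{m−1} + ⋯ + a_m = 0. -/

import Mathlib

set_option synthInstance.maxHeartbeats 1000000
set_option maxHeartbeats 1000000

/-- The `q`-th Frobenius power `I^{[q]}` of an ideal `I`: the ideal generated by the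
`q`-th powers of the elements of `I`. -/
def frobeniusPower {R : Type*} [CommRing R] (I : Ideal R) (q : ℕ) : Ideal R :=
  Ideal.span ((fun a => a ^ q) '' (I : Set R))

/-- `Rreg c` means `c ∈ R^o`, i.e. `c` avoids every minimal prime of `R`. -/
def Rreg {R : Type*} [CommRing R] (c : R) : Prop :=
  ∀ P ∈ minimalPrimes R, c ∉ P

/-- `x` lies in the tight closure `I*` of `I` (characteristic `p`). -/
def InTightClosure {R : Type*} [CommRing R] (p : ℕ) (I : Ideal R) (x : R) : Prop :=
  ∃ c, Rreg c ∧ ∃ N : ℕ, ∀ e ≥ N, c * x ^ p ^ e ∈ frobeniusPower I (p ^ e)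

/-- The Stanley–Reisner ideal of a simplicial complex `Δ` on `{1,…,n}`: the ideal of
`k[[x₁,…,xₙ]]` generated by the square-free monomials `∏_{i∈G} xᵢ` with `G ∉ Δ`. -/
noncomputable def stanleyReisnerIdeal (k : Type*) [Field k] {n : ℕ} (Δ : Finset (Finset (Fin n))) :
    Ideal (MvPowerSeries (Fin n) k) :=
  Ideal.span {f | ∃ G : Finset (Fin n), G ∉ Δ ∧
    f = ∏ i ∈ G, (MvPowerSeries.X i : MvPowerSeries (Fin n) k)}


open MvPowerSeries

namespace SRproof

variable {k : Type*} [Field k] {p : ℕ} [Fact p.Prime] [CharP k p] {n : ℕ}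

theorem pprime : p.Prime := Fact.out
theorem ppos : 0 < p := pprime.pos
theorem pone : 1 < p := pprime.one_lt

instance charPS : CharP (MvPowerSeries (Fin n) k) p := by
  apply charP_of_injective_ringHom (f := MvPowerSeries.C (σ := Fin n) (R := k))
  intro a b hab
  have := congrArg (MvPowerSeries.constantCoeff (σ := Fin n) (R := k)) hab
  simpa using this

-- smul injectivity on exponents
theorem psmul_inj {d e : Fin n →₀ ℕ} (h : p • d = p • e) : d = e := by
  ext i
  have := congrArg (fun f : Fin n →₀ ℕ => f i) h
  simp only [Finsupp.smul_apply, smul_eq_mul] at this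
  exact Nat.eq_of_mul_eq_mul_left ppos this

theorem mvpoly_coeff_pow_char (F : MvPolynomial (Fin n) k) (d : Fin n →₀ ℕ) :
    MvPolynomial.coeff (p • d) (F ^ p) = (MvPolynomial.coeff d F) ^ p := by
  induction F using MvPolynomial.induction_on' generalizing d with
  | monomial u a =>
    rw [MvPolynomial.monomial_pow]
    rw [MvPolynomial.coeff_monomial, MvPolynomial.coeff_monomial]
    by_cases h : d = u
    · subst h; simp
    · rw [if_neg (fun hh => h (psmul_inj hh).symm), if_neg (fun hh => h hh.symm), zero_pow ppos.ne']
  | add f g hf hg =>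
    rw [add_pow_char, MvPolynomial.coeff_add, MvPolynomial.coeff_add, hf, hg, add_pow_char]

theorem mvpoly_coeff_pow_char_ne (F : MvPolynomial (Fin n) k) (b : Fin n →₀ ℕ)
    (h : ¬ ∃ d, b = p • d) : MvPolynomial.coeff b (F ^ p) = 0 := by
  induction F using MvPolynomial.induction_on' with
  | monomial u a =>
    rw [MvPolynomial.monomial_pow, MvPolynomial.coeff_monomial]
    rw [if_neg (fun hh => h ⟨u, hh.symm⟩)]
  | add f g hf hg =>
    rw [add_pow_char, MvPolynomial.coeff_add, hf, hg, add_zero]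



theorem sum_single_apply_one (j : Fin n) : (∑ i : Fin n, Finsupp.single i (1:ℕ)) j = 1 := by
  rw [Finsupp.finset_sum_apply]
  simp [Finsupp.single_apply]

theorem coeff_sub_trunc (f : MvPowerSeries (Fin n) k) (b : Fin n →₀ ℕ) (hb : b ≠ 0)
    (m : Fin n →₀ ℕ) (hm : m ≤ b) :
    MvPowerSeries.coeff m (f - (↑(MvPowerSeries.trunc k (b + ∑ i : Fin n, Finsupp.single i 1) f) : MvPowerSeries (Fin n) k))
      = 0 := by
  obtain ⟨j0, hj0⟩ : ∃ j, b j ≠ 0 := by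
    by_contra hcon
    push_neg at hcon
    exact hb (Finsupp.ext fun i => hcon i)
  have hlt : m < b + ∑ i : Fin n, Finsupp.single i 1 := by
    refine lt_of_le_of_lt hm (lt_iff_le_and_ne.2 ⟨le_self_add, fun h => ?_⟩)
    have := congrArg (fun f : Fin n →₀ ℕ => f j0) h
    simp only [Finsupp.add_apply, sum_single_apply_one] at this
    omega
  rw [map_sub, MvPolynomial.coeff_coe, MvPowerSeries.coeff_trunc, if_pos hlt, sub_self]

theorem coeff_pow_char_key (f : MvPowerSeries (Fin n) k) (b : Fin n →₀ ℕ) (hb : b ≠ 0) :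
    MvPowerSeries.coeff b (f ^ p) =
      MvPolynomial.coeff b
        ((MvPowerSeries.trunc k (b + ∑ i : Fin n, Finsupp.single i 1) f) ^ p) := by
  classical
  set P : MvPolynomial (Fin n) k := MvPowerSeries.trunc k (b + ∑ i : Fin n, Finsupp.single i 1) f
    with hP
  set r : MvPowerSeries (Fin n) k := f - ↑P with hr
  have hf : f = ↑P + r := by rw [hr]; ring
  have h1 : f ^ p = (↑P : MvPowerSeries (Fin n) k) ^ p + r ^ p := by
    rw [hf, add_pow_char]
  have h2 : MvPowerSeries.coeff b (r ^ p) = 0 := by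
    have hps : r ^ p = r ^ (p - 1) * r := by
      rw [← pow_succ, Nat.sub_add_cancel ppos]
    rw [hps, MvPowerSeries.coeff_mul]
    refine Finset.sum_eq_zero fun q hq => ?_
    have hqb : q.2 ≤ b := by
      have := Finset.HasAntidiagonal.mem_antidiagonal.mp hq
      rw [← this]; exact le_add_self
    rw [coeff_sub_trunc f b hb q.2 hqb, mul_zero]
  rw [h1, map_add, h2, add_zero, ← MvPolynomial.coe_pow, MvPolynomial.coeff_coe]

theorem ps_coeff_pow_smul (f : MvPowerSeries (Fin n) k) (d : Fin n →₀ ℕ) :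
    MvPowerSeries.coeff (p • d) (f ^ p) = (MvPowerSeries.coeff d f) ^ p := by
  by_cases hb : p • d = 0
  · have hd : d = 0 := by
      ext i
      have := congrArg (fun g : Fin n →₀ ℕ => g i) hb
      simp only [Finsupp.smul_apply, smul_eq_mul, Finsupp.coe_zero, Pi.zero_apply] at this
      exact Nat.mul_eq_zero.mp this |>.resolve_left ppos.ne'
    rw [hb, hd]
    have := map_pow (MvPowerSeries.constantCoeff (σ := Fin n) (R := k)) f p
    simpa [MvPowerSeries.coeff_zero_eq_constantCoeff] using this
  · rw [coeff_pow_char_key f _ hb, mvpoly_coeff_pow_char]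
    congr 1
    rw [MvPowerSeries.coeff_trunc, if_pos]
    refine lt_of_le_of_lt ?_ (lt_iff_le_and_ne.2 ⟨le_self_add, fun h => ?_⟩)
    · intro i
      simp only [Finsupp.smul_apply, smul_eq_mul]
      exact Nat.le_mul_of_pos_left _ ppos
    · obtain ⟨j0, hj0⟩ : ∃ j, (p • d) j ≠ 0 := by
        by_contra hcon
        push_neg at hcon
        exact hb (Finsupp.ext fun i => hcon i)
      have := congrArg (fun f : Fin n →₀ ℕ => f j0) h
      simp only [Finsupp.add_apply, sum_single_apply_one] at this
      omega

theorem ps_coeff_pow_ne (f : MvPowerSeries (Fin n) k) (b : Fin n →₀ ℕ)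
    (h : ¬ ∃ d, b = p • d) : MvPowerSeries.coeff b (f ^ p) = 0 := by
  have hb : b ≠ 0 := fun h0 => h ⟨0, by simp [h0]⟩
  rw [coeff_pow_char_key f b hb]
  exact mvpoly_coeff_pow_char_ne _ _ h


theorem nat_key {q bi vi ui a : ℕ} (hq : 0 < q) (h : q * vi + a = q * bi + ui) (hui : ui < q) :
    vi ≤ bi ∧ a = q * (bi - vi) + ui := by
  have hvb : vi ≤ bi := by
    by_contra hc
    push_neg at hc
    have h1 : q * (bi + 1) ≤ q * vi := Nat.mul_le_mul le_rfl hc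
    have h2 : q * (bi + 1) = q * bi + q := by ring
    omega
  have h3 : q * (bi - vi) + q * vi = q * bi := by
    rw [← Nat.mul_add, Nat.sub_add_cancel hvb]
  exact ⟨hvb, by omega⟩

section Perfect
variable [PerfectRing k p]

noncomputable def rt (k : Type*) (p : ℕ) [Field k] [Fact p.Prime] [CharP k p] [PerfectRing k p] :
    k →+* k :=
  ((frobeniusEquiv k p).symm : k ≃+* k).toRingHom

theorem rt_frob (a : k) : rt k p (a ^ p) = a := by
  have h : a ^ p = frobeniusEquiv k p a := by
    simp [frobenius_def]
  rw [rt, RingEquiv.toRingHom_eq_coe, RingHom.coe_coe, h, RingEquiv.symm_apply_apply]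

theorem rt_inj : Function.Injective (rt k p) :=
  (frobeniusEquiv k p).symm.injective

noncomputable def phi (p : ℕ) [Fact p.Prime] [CharP k p] [PerfectRing k p] (u : Fin n →₀ ℕ)
    (f : MvPowerSeries (Fin n) k) :
    MvPowerSeries (Fin n) k :=
  fun b => rt k p (MvPowerSeries.coeff (p • b + u) f)

theorem coeff_phi (u b : Fin n →₀ ℕ) (f : MvPowerSeries (Fin n) k) :
    MvPowerSeries.coeff b (phi p u f) = rt k p (MvPowerSeries.coeff (p • b + u) f) := by
  rw [MvPowerSeries.coeff_apply]; rfl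

theorem phi_add (u : Fin n →₀ ℕ) (f g : MvPowerSeries (Fin n) k) :
    phi p u (f + g) = phi p u f + phi p u g := by
  ext b
  simp [coeff_phi, map_add]

theorem phi_zero (u : Fin n →₀ ℕ) : phi p u (0 : MvPowerSeries (Fin n) k) = 0 := by
  ext b; simp [coeff_phi]

theorem phi_pow_mul (u : Fin n →₀ ℕ) (hu : ∀ i, u i < p) (g f : MvPowerSeries (Fin n) k) :
    phi p u (g ^ p * f) = g * phi p u f := by
  classical
  ext b
  rw [coeff_phi, MvPowerSeries.coeff_mul, map_sum, MvPowerSeries.coeff_mul]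
  rw [← Finset.sum_filter_of_ne (p := fun q : (Fin n →₀ ℕ) × (Fin n →₀ ℕ) => ∃ v, q.1 = p • v)
    (f := fun q => rt k p (MvPowerSeries.coeff q.1 (g ^ p) * MvPowerSeries.coeff q.2 f))
    (by
      intro q hq hne
      by_contra hdiv
      apply hne
      have h0 : MvPowerSeries.coeff q.1 (g ^ p) = 0 :=
        ps_coeff_pow_ne g q.1 (by simpa [eq_comm] using hdiv)
      simp only [h0, zero_mul, map_zero])]
  refine (Finset.sum_bij'
    (i := fun (q : (Fin n →₀ ℕ) × (Fin n →₀ ℕ)) (_ : q ∈ Finset.HasAntidiagonal.antidiagonal b) =>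
      ((p • q.1, p • q.2 + u) : (Fin n →₀ ℕ) × (Fin n →₀ ℕ)))
    (j := fun (q : (Fin n →₀ ℕ) × (Fin n →₀ ℕ)) _ =>
      ((q.1.mapRange (· / p) (Nat.zero_div p),
        (q.2 - u).mapRange (· / p) (Nat.zero_div p)) : (Fin n →₀ ℕ) × (Fin n →₀ ℕ)))
    ?_ ?_ ?_ ?_ ?_).symm
  · -- i lands in filtered antidiagonal
    intro q hq
    rw [Finset.mem_filter, Finset.HasAntidiagonal.mem_antidiagonal]
    refine ⟨?_, ⟨q.1, rfl⟩⟩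
    have hqs : q.1 + q.2 = b := Finset.HasAntidiagonal.mem_antidiagonal.mp hq
    ext i
    have hco := congrArg (fun w : Fin n →₀ ℕ => w i) hqs
    simp only [Finsupp.add_apply, Finsupp.smul_apply, smul_eq_mul] at hco ⊢
    rw [← hco]
    ring
  · -- j lands in antidiagonal b
    intro q hq
    rw [Finset.mem_filter, Finset.HasAntidiagonal.mem_antidiagonal] at hq
    obtain ⟨hsum, v, hv⟩ := hq
    rw [Finset.HasAntidiagonal.mem_antidiagonal]
    ext i
    have hco := congrArg (fun w : Fin n →₀ ℕ => w i) hsum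
    have hvi := congrArg (fun w : Fin n →₀ ℕ => w i) hv
    simp only [Finsupp.add_apply, Finsupp.smul_apply, smul_eq_mul] at hco hvi
    rw [hvi] at hco
    obtain ⟨hvb, hq2⟩ := nat_key ppos hco (hu i)
    simp only [Finsupp.add_apply, Finsupp.mapRange_apply, Finsupp.tsub_apply]
    rw [hvi, Nat.mul_div_cancel_left _ ppos, hq2, Nat.add_sub_cancel,
      Nat.mul_div_cancel_left _ ppos]
    omega
  · -- left inverse
    intro q hq
    have h1 : ∀ x : ℕ, p * x / p = x := fun x => Nat.mul_div_cancel_left x ppos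
    refine Prod.ext ?_ ?_
    · ext i
      simp only [Finsupp.mapRange_apply, Finsupp.smul_apply, smul_eq_mul]
      exact h1 _
    · ext i
      simp only [Finsupp.mapRange_apply, Finsupp.tsub_apply, Finsupp.add_apply,
        Finsupp.smul_apply, smul_eq_mul]
      rw [Nat.add_sub_cancel]
      exact h1 _
  · -- right inverse
    intro q hq
    rw [Finset.mem_filter, Finset.HasAntidiagonal.mem_antidiagonal] at hq
    obtain ⟨hsum, v, hv⟩ := hq
    refine Prod.ext ?_ ?_
    · ext i
      have hvi := congrArg (fun w : Fin n →₀ ℕ => w i) hv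
      simp only [Finsupp.smul_apply, smul_eq_mul] at hvi ⊢
      simp only [Finsupp.mapRange_apply, hvi, Nat.mul_div_cancel_left _ ppos]
    · ext i
      have hco := congrArg (fun w : Fin n →₀ ℕ => w i) hsum
      have hvi := congrArg (fun w : Fin n →₀ ℕ => w i) hv
      simp only [Finsupp.add_apply, Finsupp.smul_apply, smul_eq_mul] at hco hvi
      rw [hvi] at hco
      obtain ⟨hvb, hq2⟩ := nat_key ppos hco (hu i)
      simp only [Finsupp.add_apply, Finsupp.mapRange_apply, Finsupp.tsub_apply,
        Finsupp.smul_apply, smul_eq_mul]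
      rw [hq2]
      have h3 : p * (b i - v i) + u i - u i = p * (b i - v i) := by omega
      rw [h3, Nat.mul_div_cancel_left _ ppos]
  · -- values agree
    intro q hq
    simp only [ps_coeff_pow_smul, map_mul, rt_frob, coeff_phi]

end Perfect

-- ## The monomial prime ideals Q_F and the map rho
section Rho
variable (k)

noncomputable def rhoFun (F : Finset (Fin n)) (f : MvPowerSeries (Fin n) k) : MvPowerSeries (Fin n) k :=
  fun b => if b.support ⊆ F then MvPowerSeries.coeff b f else 0

theorem coeff_rho (F : Finset (Fin n)) (b : Fin n →₀ ℕ) (f : MvPowerSeries (Fin n) k) :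
    MvPowerSeries.coeff b (rhoFun k F f) =
      if b.support ⊆ F then MvPowerSeries.coeff b f else 0 := by
  rw [MvPowerSeries.coeff_apply]; rfl

theorem support_le_of_add {v w b : Fin n →₀ ℕ} (h : v + w = b) :
    v.support ⊆ b.support ∧ w.support ⊆ b.support := by
  constructor <;>
  · intro i hi
    rw [Finsupp.mem_support_iff] at hi ⊢
    have := congrArg (fun z : Fin n →₀ ℕ => z i) h
    simp only [Finsupp.add_apply] at this
    omega

noncomputable def rhoHom (F : Finset (Fin n)) : MvPowerSeries (Fin n) k →+* MvPowerSeries (Fin n) k where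
  toFun := rhoFun k F
  map_one' := by
    ext b
    rw [coeff_rho]
    by_cases hb : b = 0
    · subst hb; simp
    · classical
      rw [MvPowerSeries.coeff_one, if_neg hb, ite_self]
  map_mul' := by
    intro f g
    ext b
    classical
    rw [coeff_rho, MvPowerSeries.coeff_mul, MvPowerSeries.coeff_mul]
    by_cases hb : b.support ⊆ F
    · rw [if_pos hb]
      refine Finset.sum_congr rfl fun q hq => ?_
      have hsum := Finset.HasAntidiagonal.mem_antidiagonal.mp hq
      obtain ⟨h1, h2⟩ := support_le_of_add hsum
      rw [coeff_rho, coeff_rho, if_pos (h1.trans hb), if_pos (h2.trans hb)]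
    · rw [if_neg hb]
      symm
      refine Finset.sum_eq_zero fun q hq => ?_
      have hsum := Finset.HasAntidiagonal.mem_antidiagonal.mp hq
      have : ¬ q.1.support ⊆ F ∨ ¬ q.2.support ⊆ F := by
        by_contra hcon
        push_neg at hcon
        refine hb ?_
        intro i hi
        rw [Finsupp.mem_support_iff] at hi
        have := congrArg (fun z : Fin n →₀ ℕ => z i) hsum
        simp only [Finsupp.add_apply] at this
        have : q.1 i ≠ 0 ∨ q.2 i ≠ 0 := by omega
        rcases this with h | h
        · exact hcon.1 (Finsupp.mem_support_iff.mpr h)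
        · exact hcon.2 (Finsupp.mem_support_iff.mpr h)
      rcases this with h | h
      · rw [coeff_rho, if_neg h, zero_mul]
      · rw [coeff_rho (f := g), if_neg h, mul_zero]
  map_zero' := by ext b; rw [coeff_rho]; simp
  map_add' := by
    intro f g
    ext b
    rw [coeff_rho, map_add, map_add, coeff_rho, coeff_rho]
    split_ifs <;> simp

noncomputable def QF (F : Finset (Fin n)) : Ideal (MvPowerSeries (Fin n) k) := RingHom.ker (rhoHom k F)

theorem mem_QF {F : Finset (Fin n)} {f : MvPowerSeries (Fin n) k} :
    f ∈ QF k F ↔ ∀ b : Fin n →₀ ℕ, b.support ⊆ F → MvPowerSeries.coeff b f = 0 := by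
  rw [QF, RingHom.mem_ker]
  constructor
  · intro h b hb
    have := congrArg (MvPowerSeries.coeff b) h
    rw [show (rhoHom k F) f = rhoFun k F f from rfl, coeff_rho, if_pos hb] at this
    simpa using this
  · intro h
    ext b
    rw [show (rhoHom k F) f = rhoFun k F f from rfl, coeff_rho]
    by_cases hb : b.support ⊆ F
    · rw [if_pos hb, h b hb]; simp
    · rw [if_neg hb]; simp

theorem QF_isPrime (F : Finset (Fin n)) : (QF k F).IsPrime := by
  haveI : IsDomain (MvPowerSeries (Fin n) k) := NoZeroDivisors.to_isDomain _
  exact RingHom.ker_isPrime _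

end Rho

section Descent
variable [PerfectRing k p]

theorem phi_mem_QF {F : Finset (Fin n)} {u : Fin n →₀ ℕ} (hsupp : u.support ⊆ F)
    {f : MvPowerSeries (Fin n) k} (hf : f ∈ QF k F) : phi p u f ∈ QF k F := by
  rw [mem_QF] at hf ⊢
  intro b hb
  rw [coeff_phi, hf, map_zero]
  intro i hi
  rw [Finsupp.mem_support_iff] at hi
  simp only [Finsupp.add_apply, Finsupp.smul_apply, smul_eq_mul] at hi
  have : b i ≠ 0 ∨ u i ≠ 0 := by
    by_contra hcon
    push_neg at hcon
    rw [hcon.1, hcon.2] at hi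
    simp at hi
  rcases this with h | h
  · exact hb (Finsupp.mem_support_iff.mpr h)
  · exact hsupp (Finsupp.mem_support_iff.mpr h)

theorem phi_span_pow (u : Fin n →₀ ℕ) (hu : ∀ i, u i < p) (A : Ideal (MvPowerSeries (Fin n) k))
    {z : MvPowerSeries (Fin n) k}
    (hz : z ∈ Ideal.span ((· ^ p) '' (A : Set (MvPowerSeries (Fin n) k)))) :
    phi p u z ∈ A := by
  have main : ∀ f, phi p u (f * z) ∈ A := by
    induction hz using Submodule.span_induction with
    | mem x hx =>
      obtain ⟨a, ha, rfl⟩ := hx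
      intro f
      rw [mul_comm, phi_pow_mul u hu a f]
      exact Ideal.mul_mem_right _ A ha
    | zero => intro f; rw [mul_zero, phi_zero]; exact A.zero_mem
    | add y z _ _ hy hz =>
      intro f
      rw [mul_add, phi_add]
      exact A.add_mem (hy f) (hz f)
    | smul r y _ hy =>
      intro f
      rw [smul_eq_mul, show f * (r * y) = (f * r) * y from by ring]
      exact hy (f * r)
  simpa using main 1

theorem fp_succ_le (J : Ideal (MvPowerSeries (Fin n) k)) (e : ℕ) :
    frobeniusPower J (p ^ (e + 1)) ≤
      Ideal.span ((· ^ p) '' ((frobeniusPower J (p ^ e) : Ideal (MvPowerSeries (Fin n) k)) :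
        Set (MvPowerSeries (Fin n) k))) := by
  rw [frobeniusPower]
  refine Ideal.span_le.mpr ?_
  rintro z ⟨a, ha, rfl⟩
  refine Ideal.subset_span ⟨a ^ p ^ e, Ideal.subset_span ⟨a, ha, rfl⟩, ?_⟩
  show (a ^ p ^ e) ^ p = a ^ p ^ (e + 1)
  rw [← pow_mul, pow_succ]

theorem fp_one (J : Ideal (MvPowerSeries (Fin n) k)) : frobeniusPower J 1 = J := by
  rw [frobeniusPower]
  simp only [pow_one]
  rw [Set.image_id', Ideal.span_eq]

theorem step_mem {F : Finset (Fin n)} {u : Fin n →₀ ℕ} (hu : ∀ i, u i < p)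
    (hsupp : u.support ⊆ F) (J : Ideal (MvPowerSeries (Fin n) k)) (e : ℕ)
    {z : MvPowerSeries (Fin n) k} (hz : z ∈ frobeniusPower J (p ^ (e + 1)) ⊔ QF k F) :
    phi p u z ∈ frobeniusPower J (p ^ e) ⊔ QF k F := by
  obtain ⟨z1, hz1, z2, hz2, rfl⟩ := Submodule.mem_sup.mp hz
  rw [phi_add]
  exact Submodule.mem_sup.mpr
    ⟨phi p u z1, phi_span_pow u hu _ (fp_succ_le J e hz1),
     phi p u z2, phi_mem_QF hsupp hz2, rfl⟩

theorem u_le_sum (u : Fin n →₀ ℕ) (i : Fin n) : u i ≤ u.sum fun _ v => v := by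
  by_cases hi : i ∈ u.support
  · exact Finset.single_le_sum (fun j _ => Nat.zero_le _) hi
  · rw [Finsupp.notMem_support_iff] at hi
    omega

theorem descent {F : Finset (Fin n)} (J : Ideal (MvPowerSeries (Fin n) k))
    (c x : MvPowerSeries (Fin n) k) (hc : c ∉ QF k F) (N : ℕ)
    (h : ∀ e ≥ N, c * x ^ p ^ e ∈ frobeniusPower J (p ^ e) ⊔ QF k F) :
    x ∈ J ⊔ QF k F := by
  -- find a coefficient of `c` supported inside `F`
  obtain ⟨u, hsupp, hcu⟩ : ∃ u : Fin n →₀ ℕ, u.support ⊆ F ∧ MvPowerSeries.coeff u c ≠ 0 := by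
    by_contra hcon
    push_neg at hcon
    exact hc ((mem_QF (k := k)).mpr fun b hb => hcon b hb)
  set V : ℕ := u.sum fun _ v => v with hV
  set E : ℕ := N + V with hE
  have hNE : N ≤ E := by omega
  have hUE : ∀ i, u i < p ^ E := by
    intro i
    calc u i ≤ V := u_le_sum u i
    _ < p ^ V := Nat.lt_pow_self pone
    _ ≤ p ^ E := Nat.pow_le_pow_right ppos (by omega)
  -- digits of u
  set dig : ℕ → (Fin n →₀ ℕ) := fun j => u.mapRange (fun v => v / p ^ j % p) (by simp) with hdig
  set umod : ℕ → (Fin n →₀ ℕ) := fun j => u.mapRange (fun v => v % p ^ j) (by simp) with humod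
  have hdig_lt : ∀ j i, dig j i < p := by
    intro j i
    simp only [hdig, Finsupp.mapRange_apply]
    exact Nat.mod_lt _ ppos
  have hdig_supp : ∀ j, (dig j).support ⊆ F := by
    intro j
    exact (Finsupp.support_mapRange).trans hsupp
  -- the sequence of roots
  set cs : ℕ → MvPowerSeries (Fin n) k :=
    fun j => Nat.rec c (fun j cj => phi p (dig j) cj) j with hcs
  have cs_zero : cs 0 = c := rfl
  have cs_succ : ∀ j, cs (j + 1) = phi p (dig j) (cs j) := fun j => rfl
  -- membership claim
  have mem : ∀ j, j ≤ E → cs j * x ^ p ^ (E - j) ∈ frobeniusPower J (p ^ (E - j)) ⊔ QF k F := by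
    intro j
    induction j with
    | zero =>
      intro _
      rw [cs_zero, Nat.sub_zero]
      exact h E hNE
    | succ j ih =>
      intro hj
      have hj' : j ≤ E := by omega
      have prev := ih hj'
      set e : ℕ := E - (j + 1) with he
      have hEj : E - j = e + 1 := by omega
      rw [hEj] at prev
      have key := step_mem (hdig_lt j) (hdig_supp j) J e prev
      have heq : phi p (dig j) (cs j * x ^ p ^ (e + 1)) = x ^ p ^ e * phi p (dig j) (cs j) := by
        rw [show cs j * x ^ p ^ (e + 1) = (x ^ p ^ e) ^ p * cs j from by
          rw [← pow_mul, ← pow_succ]; ring]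
        exact phi_pow_mul (dig j) (hdig_lt j) _ _
      rw [heq] at key
      rw [cs_succ, mul_comm]
      exact key
  -- coefficient formula
  have hcoeff : ∀ j (b : Fin n →₀ ℕ),
      MvPowerSeries.coeff b (cs j) =
        (rt k p)^[j] (MvPowerSeries.coeff (p ^ j • b + umod j) c) := by
    intro j
    induction j with
    | zero =>
      intro b
      have : umod 0 = 0 := by
        ext i; simp [humod, Nat.mod_one]
      rw [this, cs_zero]
      simp
    | succ j ih =>
      intro b
      have harg : p ^ j • (p • b + dig j) + umod j = p ^ (j + 1) • b + umod (j + 1) := by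
        ext i
        simp only [Finsupp.add_apply, Finsupp.smul_apply, smul_eq_mul, Finsupp.mapRange_apply,
          hdig, humod]
        show p ^ j * (p * b i + u i / p ^ j % p) + u i % p ^ j = p ^ (j + 1) * b i + u i % p ^ (j + 1)
        rw [Nat.mod_pow_succ, pow_succ]
        ring
      rw [cs_succ, coeff_phi, ih (p • b + dig j), harg]
      exact (Function.iterate_succ_apply' _ j _).symm
  -- the top root has invertible constant coefficient
  have humodE : umod E = u := by
    ext i
    simp only [humod, Finsupp.mapRange_apply]
    exact Nat.mod_eq_of_lt (hUE i)
  have h0 : MvPowerSeries.coeff 0 (cs E) ≠ 0 := by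
    rw [hcoeff E 0, smul_zero, zero_add, humodE]
    intro hzero
    have : (rt k p)^[E] (0 : k) = 0 := Function.iterate_fixed (map_zero _) E
    exact hcu (rt_inj.iterate E (by rw [hzero, this]))
  have hunit : IsUnit (cs E) := by
    rw [MvPowerSeries.isUnit_iff_constantCoeff]
    rw [← MvPowerSeries.coeff_zero_eq_constantCoeff_apply]
    exact isUnit_iff_ne_zero.mpr h0
  -- conclude
  have hfin : cs E * x ∈ J ⊔ QF k F := by
    have := mem E le_rfl
    rw [Nat.sub_self, pow_zero, pow_one, fp_one] at this
    exact this
  obtain ⟨v, hv⟩ := hunit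
  have hx : x = ↑v⁻¹ * (cs E * x) := by
    rw [← mul_assoc, ← hv, Units.inv_mul, one_mul]
  rw [hx]
  exact Ideal.mul_mem_left _ _ hfin

end Descent

-- ## Stanley-Reisner combinatorics
section SR
variable (k)

/-- indicator exponent of a square-free monomial -/
noncomputable def indic (G : Finset (Fin n)) : Fin n →₀ ℕ := ∑ i ∈ G, Finsupp.single i 1

theorem indic_apply (G : Finset (Fin n)) (i : Fin n) :
    indic G i = if i ∈ G then 1 else 0 := by
  classical
  rw [indic, Finsupp.finset_sum_apply]
  rw [Finset.sum_congr rfl (fun j _ => Finsupp.single_apply (a := j) (b := (1:ℕ)) (a' := i))]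
  exact Finset.sum_ite_eq' G i fun _ => 1

theorem support_indic (G : Finset (Fin n)) : (indic G).support = G := by
  ext i
  rw [Finsupp.mem_support_iff, indic_apply]
  by_cases h : i ∈ G <;> simp [h]

theorem prodX_eq (G : Finset (Fin n)) :
    (∏ i ∈ G, (MvPowerSeries.X i : MvPowerSeries (Fin n) k)) =
      MvPowerSeries.monomial (indic G) 1 := by
  classical
  induction G using Finset.induction_on with
  | empty => simp [indic, MvPowerSeries.monomial_zero_one]
  | insert _ _ hnot =>
    rename_i j G ih
    rw [Finset.prod_insert hnot, ih, MvPowerSeries.X,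
      MvPowerSeries.monomial_mul_monomial, one_mul]
    congr 1
    simp only [indic]
    rw [Finset.sum_insert hnot]

theorem exists_facet (Δ : Finset (Finset (Fin n))) (G : Finset (Fin n)) (hG : G ∈ Δ) :
    ∃ F ∈ Δ.filter fun F => ∀ G' ∈ Δ, F ⊆ G' → F = G', G ⊆ F := by
  classical
  set T := Δ.filter (fun F => G ⊆ F) with hT
  have hTne : T.Nonempty := ⟨G, by simp [hT, hG]⟩
  obtain ⟨F, hFT, hmax⟩ := Finset.exists_max_image T (fun F => F.card) hTne
  rw [hT, Finset.mem_filter] at hFT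
  refine ⟨F, ?_, hFT.2⟩
  rw [Finset.mem_filter]
  refine ⟨hFT.1, fun G' hG' hFG' => ?_⟩
  have hG'T : G' ∈ T := by
    rw [hT, Finset.mem_filter]
    exact ⟨hG', hFT.2.trans hFG'⟩
  exact Finset.eq_of_subset_of_card_le hFG' (hmax G' hG'T)

theorem I_le_QF (Δ : Finset (Finset (Fin n)))
    (hΔclosed : ∀ F ∈ Δ, ∀ G : Finset (Fin n), G ⊆ F → G ∈ Δ)
    (F : Finset (Fin n)) (hF : F ∈ Δ) :
    stanleyReisnerIdeal k Δ ≤ QF k F := by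
  rw [stanleyReisnerIdeal]
  refine Ideal.span_le.mpr ?_
  rintro f ⟨G, hG, rfl⟩
  rw [SetLike.mem_coe, prodX_eq, mem_QF]
  intro b hb
  classical
  rw [MvPowerSeries.coeff_monomial]
  refine if_neg fun hbeq => ?_
  refine hG (hΔclosed F hF G ?_)
  rw [← support_indic G, ← hbeq]
  exact hb

theorem inter_QF_le_I (Δ : Finset (Finset (Fin n))) (hΔne : Δ.Nonempty)
    (hΔclosed : ∀ F ∈ Δ, ∀ G : Finset (Fin n), G ⊆ F → G ∈ Δ)
    (f : MvPowerSeries (Fin n) k)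
    (hf : ∀ F ∈ Δ.filter fun F => ∀ G' ∈ Δ, F ⊆ G' → F = G', f ∈ QF k F) :
    f ∈ stanleyReisnerIdeal k Δ := by
  classical
  have hface : ∀ b : Fin n →₀ ℕ, b.support ∈ Δ → MvPowerSeries.coeff b f = 0 := by
    intro b hb
    obtain ⟨F, hFfac, hbF⟩ := exists_facet Δ b.support hb
    exact ((mem_QF (k := k)).mp (hf F hFfac)) b hbF
  set 𝒢 : Finset (Finset (Fin n)) := Finset.univ.filter (fun G => G ∉ Δ) with h𝒢
  set g : Finset (Fin n) → MvPowerSeries (Fin n) k := fun G b =>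
    if (b + indic G).support = G then MvPowerSeries.coeff (b + indic G) f else 0 with hg
  have hcoeffg : ∀ G b, MvPowerSeries.coeff b (g G) =
      if (b + indic G).support = G then MvPowerSeries.coeff (b + indic G) f else 0 := by
    intro G b
    rw [MvPowerSeries.coeff_apply]
  have hterm : ∀ (a : Fin n →₀ ℕ) (G : Finset (Fin n)),
      MvPowerSeries.coeff a (MvPowerSeries.monomial (indic G) 1 * g G) =
        if indic G ≤ a ∧ a.support = G then MvPowerSeries.coeff a f else 0 := by
    intro a G
    rw [MvPowerSeries.coeff_monomial_mul]
    by_cases hle : indic G ≤ a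
    · rw [if_pos hle, hcoeffg, one_mul, tsub_add_cancel_of_le hle]
      by_cases hsupp : a.support = G
      · rw [if_pos hsupp, if_pos ⟨hle, hsupp⟩]
      · rw [if_neg hsupp, if_neg (fun hcon => hsupp hcon.2)]
    · rw [if_neg hle, if_neg (fun hcon => hle hcon.1)]
  have hdecomp : f = ∑ G ∈ 𝒢, MvPowerSeries.monomial (indic G) 1 * g G := by
    ext a
    rw [map_sum]
    rw [Finset.sum_congr rfl (fun G _ => hterm a G)]
    by_cases ha : a.support ∈ Δ
    · rw [hface a ha]
      symm
      refine Finset.sum_eq_zero fun G hG => ?_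
      rw [h𝒢, Finset.mem_filter] at hG
      refine if_neg fun hcon => ?_
      rw [← hcon.2] at hG
      exact hG.2 ha
    · have hG0 : a.support ∈ 𝒢 := by
        rw [h𝒢, Finset.mem_filter]
        exact ⟨Finset.mem_univ _, ha⟩
      have hle0 : indic a.support ≤ a := by
        intro i
        rw [indic_apply]
        by_cases hi : i ∈ a.support
        · rw [if_pos hi]
          have := Finsupp.mem_support_iff.mp hi
          omega
        · rw [if_neg hi]
          exact Nat.zero_le _
      rw [Finset.sum_eq_single_of_mem a.support hG0
        (fun G hG hne => if_neg fun hcon => hne hcon.2.symm)]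
      rw [if_pos ⟨hle0, rfl⟩]
  rw [hdecomp]
  refine Ideal.sum_mem _ fun G hG => ?_
  rw [h𝒢, Finset.mem_filter] at hG
  refine Ideal.mul_mem_right _ _ (Ideal.subset_span ⟨G, hG.2, (prodX_eq k G).symm⟩)

theorem X_mem_QF (F : Finset (Fin n)) (i : Fin n) :
    (MvPowerSeries.X i : MvPowerSeries (Fin n) k) ∈ QF k F ↔ i ∉ F := by
  classical
  constructor
  · intro h hiF
    have := (mem_QF (k := k)).mp h (Finsupp.single i 1) (by
      rw [Finsupp.support_single_ne_zero i one_ne_zero]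
      intro j hj
      rw [Finset.mem_singleton] at hj
      rwa [hj])
    rw [MvPowerSeries.coeff_X, if_pos rfl] at this
    exact one_ne_zero this
  · intro hiF
    rw [mem_QF]
    intro b hb
    rw [MvPowerSeries.coeff_X]
    refine if_neg fun hbeq => ?_
    refine hiF (hb ?_)
    rw [hbeq, Finsupp.support_single_ne_zero i one_ne_zero]
    exact Finset.mem_singleton_self i

theorem facet_eq_of_QF_le (Δ : Finset (Finset (Fin n)))
    {F F' : Finset (Fin n)}
    (hF : F ∈ Δ.filter fun F => ∀ G' ∈ Δ, F ⊆ G' → F = G')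
    (hF' : F' ∈ Δ.filter fun F => ∀ G' ∈ Δ, F ⊆ G' → F = G')
    (hle : QF k F' ≤ QF k F) : F' = F := by
  have hsub : F ⊆ F' := by
    intro i hiF
    by_contra hiF'
    have : (MvPowerSeries.X i : MvPowerSeries (Fin n) k) ∈ QF k F :=
      hle ((X_mem_QF k F' i).mpr hiF')
    exact ((X_mem_QF k F i).mp this) hiF
  rw [Finset.mem_filter] at hF hF'
  exact (hF.2 F' hF'.1 hsub).symm

theorem prime_prod_mem {R : Type*} [CommRing R] {q : Ideal R} (hq : q.IsPrime)
    {ι : Type*} (s : Finset ι) (g : ι → R) (h : (∏ i ∈ s, g i) ∈ q) :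
    ∃ i ∈ s, g i ∈ q := by
  classical
  induction s using Finset.induction_on with
  | empty =>
    exfalso
    rw [Finset.prod_empty] at h
    exact hq.ne_top (Ideal.eq_top_of_isUnit_mem q h isUnit_one)
  | insert _ _ hnot =>
    rename_i j s ih
    rw [Finset.prod_insert hnot] at h
    rcases hq.mem_or_mem h with h1 | h1
    · exact ⟨j, Finset.mem_insert_self j s, h1⟩
    · obtain ⟨i, hi, hgi⟩ := ih h1
      exact ⟨i, Finset.mem_insert_of_mem hi, hgi⟩

theorem prime_contains_QF (Δ : Finset (Finset (Fin n))) (hΔne : Δ.Nonempty)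
    (hΔclosed : ∀ F ∈ Δ, ∀ G : Finset (Fin n), G ⊆ F → G ∈ Δ)
    {q : Ideal (MvPowerSeries (Fin n) k)} (hq : q.IsPrime)
    (hIq : stanleyReisnerIdeal k Δ ≤ q) :
    ∃ F ∈ Δ.filter fun F => ∀ G' ∈ Δ, F ⊆ G' → F = G', QF k F ≤ q := by
  classical
  by_contra hcon
  push_neg at hcon
  have hz : ∀ F ∈ Δ.filter fun F => ∀ G' ∈ Δ, F ⊆ G' → F = G',
      ∃ z, z ∈ QF k F ∧ z ∉ q := by
    intro F hF
    obtain ⟨z, hz1, hz2⟩ := SetLike.not_le_iff_exists.mp (hcon F hF)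
    exact ⟨z, hz1, hz2⟩
  choose! z hz1 hz2 using hz
  set Fs := Δ.filter fun F => ∀ G' ∈ Δ, F ⊆ G' → F = G' with hFs
  have hprod : (∏ F ∈ Fs, z F) ∈ stanleyReisnerIdeal k Δ := by
    refine inter_QF_le_I k Δ hΔne hΔclosed _ fun F hF => ?_
    rw [← Finset.mul_prod_erase Fs z hF]
    exact Ideal.mul_mem_right _ _ (hz1 F hF)
  obtain ⟨F, hF, hFq⟩ := prime_prod_mem hq Fs z (hIq hprod)
  exact hz2 F hF hFq

theorem QFbar_minimal (Δ : Finset (Finset (Fin n))) (hΔne : Δ.Nonempty)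
    (hΔclosed : ∀ F ∈ Δ, ∀ G : Finset (Fin n), G ⊆ F → G ∈ Δ)
    {F : Finset (Fin n)} (hF : F ∈ Δ.filter fun F => ∀ G' ∈ Δ, F ⊆ G' → F = G') :
    (QF k F).map (Ideal.Quotient.mk (stanleyReisnerIdeal k Δ)) ∈
      minimalPrimes (MvPowerSeries (Fin n) k ⧸ stanleyReisnerIdeal k Δ) := by
  classical
  set I := stanleyReisnerIdeal k Δ with hI
  have hFΔ : F ∈ Δ := (Finset.mem_filter.mp hF).1
  have hIle : I ≤ QF k F := I_le_QF k Δ hΔclosed F hFΔ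
  have hker : RingHom.ker (Ideal.Quotient.mk I) = I := Ideal.mk_ker
  haveI hQFprime : (QF k F).IsPrime := QF_isPrime k F
  have hmapprime : ((QF k F).map (Ideal.Quotient.mk I)).IsPrime :=
    Ideal.map_isPrime_of_surjective Ideal.Quotient.mk_surjective (by rw [hker]; exact hIle)
  rw [minimalPrimes]
  refine ⟨⟨hmapprime, bot_le⟩, ?_⟩
  intro Q hQ hle
  haveI hQprime : Q.IsPrime := hQ.1
  set q := Q.comap (Ideal.Quotient.mk I) with hq
  haveI hqprime : q.IsPrime := Ideal.IsPrime.comap _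
  have hIq : I ≤ q := by
    intro w hw
    have hw0 : Ideal.Quotient.mk I w = 0 := Ideal.Quotient.eq_zero_iff_mem.mpr hw
    rw [hq, Ideal.mem_comap, hw0]
    exact Q.zero_mem
  have hqQF : q ≤ QF k F := by
    rw [hq]
    refine le_trans (Ideal.comap_mono hle) ?_
    rw [Ideal.comap_map_of_surjective _ Ideal.Quotient.mk_surjective]
    rw [← RingHom.ker_eq_comap_bot, hker]
    exact sup_le le_rfl hIle
  obtain ⟨F', hF', hF'q⟩ := prime_contains_QF k Δ hΔne hΔclosed hqprime hIq
  have hFF' : F' = F := facet_eq_of_QF_le k Δ hF hF' (hF'q.trans hqQF)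
  have hQFq : QF k F ≤ q := by rw [← hFF']; exact hF'q
  have : (QF k F).map (Ideal.Quotient.mk I) ≤ q.map (Ideal.Quotient.mk I) :=
    Ideal.map_mono hQFq
  rwa [hq, Ideal.map_comap_of_surjective _ Ideal.Quotient.mk_surjective] at this

end SR

-- ## Vieta-style expansion and transport lemmas
theorem vieta {R : Type*} [CommRing R] (J : Ideal R) (x : R) {ι : Type*}
    (s : Finset ι) (y : ι → R) (hy : ∀ F ∈ s, y F ∈ J) :
    ∃ a : ℕ → R, a 0 = 1 ∧ (∀ i, 1 ≤ i → a i ∈ J ^ i) ∧ (∀ i, i > s.card → a i = 0) ∧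
      ∏ F ∈ s, (x - y F) = ∑ i ∈ Finset.range (s.card + 1), a i * x ^ (s.card - i) := by
  classical
  induction s using Finset.induction_on with
  | empty =>
    refine ⟨fun i => if i = 0 then 1 else 0, rfl, ?_, ?_, ?_⟩
    · intro i hi
      show (if i = 0 then (1:R) else 0) ∈ J ^ i
      rw [if_neg (by omega)]; exact (J ^ i).zero_mem
    · intro i hi
      show (if i = 0 then (1:R) else 0) = 0
      rw [if_neg (by omega)]
    · simp
  | insert _ _ hnot =>
    rename_i F₀ s ih
    obtain ⟨a, ha0, haJ, hav, hsum⟩ := ih (fun F hF => hy F (Finset.mem_insert_of_mem hF))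
    set l := s.card with hl
    have hyF₀ : y F₀ ∈ J := hy F₀ (Finset.mem_insert_self F₀ s)
    refine ⟨fun i => a i - y F₀ * (if i = 0 then 0 else a (i - 1)), by simp [ha0], ?_, ?_, ?_⟩
    · intro i hi
      show a i - y F₀ * (if i = 0 then 0 else a (i - 1)) ∈ J ^ i
      rw [if_neg (by omega)]
      refine Submodule.sub_mem _ (haJ i hi) ?_
      by_cases h1 : i = 1
      · subst h1
        rw [show (1:ℕ) - 1 = 0 from rfl, ha0, mul_one, pow_one]
        exact hyF₀
      · have hi2 : 2 ≤ i := by omega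
        have hpow : J ^ i = J ^ (i - 1) * J := by
          rw [← pow_succ]
          congr 1
          omega
        rw [hpow, mul_comm (y F₀)]
        exact Ideal.mul_mem_mul (haJ (i - 1) (by omega)) hyF₀
    · intro i hi
      rw [Finset.card_insert_of_notMem hnot, ← hl] at hi
      show a i - y F₀ * (if i = 0 then 0 else a (i - 1)) = 0
      rw [hav i (by omega), if_neg (by omega), hav (i - 1) (by omega), mul_zero, sub_zero]
    · rw [Finset.prod_insert hnot, hsum, Finset.card_insert_of_notMem hnot, ← hl]
      have expand : (x - y F₀) * (∑ i ∈ Finset.range (l + 1), a i * x ^ (l - i))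
          = (∑ i ∈ Finset.range (l + 1), a i * x ^ (l + 1 - i))
            - ∑ i ∈ Finset.range (l + 1), y F₀ * (a i * x ^ (l - i)) := by
        rw [sub_mul, Finset.mul_sum, Finset.mul_sum]
        congr 1
        refine Finset.sum_congr rfl fun i hi => ?_
        rw [Finset.mem_range] at hi
        rw [show l + 1 - i = (l - i) + 1 from by omega, pow_succ]
        ring
      have target : ∑ i ∈ Finset.range (l + 1 + 1),
            (a i - y F₀ * (if i = 0 then 0 else a (i - 1))) * x ^ (l + 1 - i)
          = (∑ i ∈ Finset.range (l + 1 + 1), a i * x ^ (l + 1 - i))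
            - ∑ i ∈ Finset.range (l + 1 + 1),
                y F₀ * (if i = 0 then 0 else a (i - 1)) * x ^ (l + 1 - i) := by
        rw [← Finset.sum_sub_distrib]
        exact Finset.sum_congr rfl fun i _ => by ring
      have hA : ∑ i ∈ Finset.range (l + 1 + 1), a i * x ^ (l + 1 - i)
          = ∑ i ∈ Finset.range (l + 1), a i * x ^ (l + 1 - i) := by
        rw [Finset.sum_range_succ, hav (l + 1) (by omega), zero_mul, add_zero]
      have hB : ∑ i ∈ Finset.range (l + 1 + 1),
            y F₀ * (if i = 0 then 0 else a (i - 1)) * x ^ (l + 1 - i)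
          = ∑ i ∈ Finset.range (l + 1), y F₀ * (a i * x ^ (l - i)) := by
        rw [Finset.sum_range_succ']
        have h0 : y F₀ * (if (0:ℕ) = 0 then (0:R) else a (0 - 1)) * x ^ (l + 1 - 0) = 0 := by
          simp
        rw [h0, add_zero]
        refine Finset.sum_congr rfl fun i hi => ?_
        rw [Finset.mem_range] at hi
        rw [if_neg (Nat.succ_ne_zero i), Nat.add_sub_cancel,
          show l + 1 - (i + 1) = l - i from by omega]
        ring
      rw [expand, target, hA, hB]

theorem fp_le_map {R S : Type*} [CommRing R] [CommRing S] (f : R →+* S)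
    (hf : Function.Surjective f) (J : Ideal S) (q : ℕ) :
    frobeniusPower J q ≤ (frobeniusPower (J.comap f) q).map f := by
  rw [frobeniusPower]
  refine Ideal.span_le.mpr ?_
  rintro z ⟨b, hb, rfl⟩
  obtain ⟨a, rfl⟩ := hf b
  have ha : a ∈ J.comap f := hb
  show f a ^ q ∈ _
  rw [← map_pow]
  exact Ideal.mem_map_of_mem f (Ideal.subset_span ⟨a, ha, rfl⟩)

end SRproof

open SRproof in
/-- The Stanley–Reisner ring `R = S/I_Δ` of a simplicial complex `Δ` with
exactly `m` facets is `m`-tight: every element of `J*` satisfies a degree-`m` equation of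
integral dependence over `J`, for every ideal `J` of `R`. -/
theorem stanley_reisner_is_fmax_tight {k : Type*} [Field k] (p : ℕ) [Fact p.Prime]
    [CharP k p] [PerfectRing k p] (n : ℕ)
    (Δ : Finset (Finset (Fin n))) (hΔne : Δ.Nonempty)
    (hΔclosed : ∀ F ∈ Δ, ∀ G : Finset (Fin n), G ⊆ F → G ∈ Δ)
    (m : ℕ) (hm : (Δ.filter fun F => ∀ G ∈ Δ, F ⊆ G → F = G).card = m) :
    ∀ J : Ideal (MvPowerSeries (Fin n) k ⧸ stanleyReisnerIdeal k Δ),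
      ∀ x : MvPowerSeries (Fin n) k ⧸ stanleyReisnerIdeal k Δ,
        InTightClosure p J x →
          ∃ a : ℕ → MvPowerSeries (Fin n) k ⧸ stanleyReisnerIdeal k Δ,
            (∀ i, 1 ≤ i → i ≤ m → a i ∈ J ^ i) ∧
            x ^ m + ∑ i ∈ Finset.Icc 1 m, a i * x ^ (m - i) = 0 := by
  classical
  intro J x hx
  obtain ⟨c, hreg, N, hN⟩ := hx
  have hI : True := trivial
  obtain ⟨C, hC⟩ := Ideal.Quotient.mk_surjective c
  obtain ⟨Xl, hXl⟩ := Ideal.Quotient.mk_surjective x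
  have main : ∀ F ∈ Δ.filter (fun F => ∀ G ∈ Δ, F ⊆ G → F = G), ∃ y ∈ J.comap (Ideal.Quotient.mk (stanleyReisnerIdeal k Δ)), Xl - y ∈ QF k F := by
    intro F hF
    have hc : C ∉ QF k F := by
      intro hCQF
      have hcmem : c ∈ (QF k F).map (Ideal.Quotient.mk (stanleyReisnerIdeal k Δ)) := by
        rw [← hC]
        exact Ideal.mem_map_of_mem _ hCQF
      exact hreg _ (QFbar_minimal k Δ hΔne hΔclosed hF) hcmem
    have hmem : ∀ e ≥ N, C * Xl ^ p ^ e ∈ frobeniusPower (J.comap (Ideal.Quotient.mk (stanleyReisnerIdeal k Δ))) (p ^ e) ⊔ QF k F := by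
      intro e he
      have h1 := hN e he
      have h2 : c * x ^ p ^ e ∈ (frobeniusPower (J.comap (Ideal.Quotient.mk (stanleyReisnerIdeal k Δ))) (p ^ e)).map (Ideal.Quotient.mk (stanleyReisnerIdeal k Δ)) :=
        fp_le_map _ Ideal.Quotient.mk_surjective J (p ^ e) h1
      have h3 : Ideal.Quotient.mk (stanleyReisnerIdeal k Δ) (C * Xl ^ p ^ e) = c * x ^ p ^ e := by
        rw [map_mul, map_pow, hC, hXl]
      have h4 : C * Xl ^ p ^ e ∈
          Ideal.comap (Ideal.Quotient.mk (stanleyReisnerIdeal k Δ))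
            ((frobeniusPower (J.comap (Ideal.Quotient.mk (stanleyReisnerIdeal k Δ))) (p ^ e)).map (Ideal.Quotient.mk (stanleyReisnerIdeal k Δ))) := by
        rw [Ideal.mem_comap, h3]
        exact h2
      rw [Ideal.comap_map_of_surjective _ Ideal.Quotient.mk_surjective,
        ← RingHom.ker_eq_comap_bot, Ideal.mk_ker] at h4
      exact (sup_le_sup_left (I_le_QF k Δ hΔclosed F (Finset.mem_filter.mp hF).1) _) h4
    have hdesc := descent (F := F) (J.comap (Ideal.Quotient.mk (stanleyReisnerIdeal k Δ))) C Xl hc N hmem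
    obtain ⟨y, hy, w, hw, hyw⟩ := Submodule.mem_sup.mp hdesc
    refine ⟨y, hy, ?_⟩
    rw [← hyw]
    simpa using hw
  choose! y hyJS hyQF using main
  have hprod : (∏ F ∈ Δ.filter (fun F => ∀ G ∈ Δ, F ⊆ G → F = G), (Xl - y F)) ∈ stanleyReisnerIdeal k Δ := by
    refine inter_QF_le_I k Δ hΔne hΔclosed _ fun F hF => ?_
    rw [← Finset.mul_prod_erase (Δ.filter (fun F => ∀ G ∈ Δ, F ⊆ G → F = G)) _ hF]
    exact Ideal.mul_mem_right _ _ (hyQF F hF)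
  have hprod0 : (∏ F ∈ Δ.filter (fun F => ∀ G ∈ Δ, F ⊆ G → F = G), (x - Ideal.Quotient.mk (stanleyReisnerIdeal k Δ) (y F))) = 0 := by
    have h5 : Ideal.Quotient.mk (stanleyReisnerIdeal k Δ) (∏ F ∈ Δ.filter (fun F => ∀ G ∈ Δ, F ⊆ G → F = G), (Xl - y F))
        = ∏ F ∈ Δ.filter (fun F => ∀ G ∈ Δ, F ⊆ G → F = G), (x - Ideal.Quotient.mk (stanleyReisnerIdeal k Δ) (y F)) := by
      rw [map_prod]
      exact Finset.prod_congr rfl fun F _ => by rw [map_sub, hXl]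
    rw [← h5]
    exact Ideal.Quotient.eq_zero_iff_mem.mpr hprod
  obtain ⟨a, ha0, haJ, hav, hsum⟩ := vieta J x (Δ.filter (fun F => ∀ G ∈ Δ, F ⊆ G → F = G)) (fun F => Ideal.Quotient.mk (stanleyReisnerIdeal k Δ) (y F))
    (fun F hF => Ideal.mem_comap.mp (hyJS F hF))
  rw [hprod0, hm] at hsum
  refine ⟨a, fun i h1 _ => haJ i h1, ?_⟩
  have hsplit : ∑ i ∈ Finset.range (m + 1), a i * x ^ (m - i)
      = x ^ m + ∑ i ∈ Finset.Icc 1 m, a i * x ^ (m - i) := by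
    rw [Finset.sum_range_succ', ha0, one_mul, Nat.sub_zero, add_comm]
    congr 1
    rw [show Finset.Icc 1 m = Finset.Ico 1 (m + 1) from by rw [Finset.Ico_add_one_right_eq_Icc],
      Finset.sum_Ico_eq_sum_range]
    simp only [Nat.add_sub_cancel]
    refine Finset.sum_congr rfl fun i _ => ?_
    rw [Nat.add_comm 1 i]
  rw [← hsplit, ← hsum]
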